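/- Let d ≥ 2, p prime with gcd(p,d) = 1, b ≥ 1, u with digits u_0,...,u_{b-1} ∈ {0,...,p-1}, and 1 ≤ k ≤ d-1. With ω_{Δ,u}(n) = (1/b)·Σ_{i=1}^b (⌈((p-1)n + u_{b-i})/d⌉ - δ^{(i)}(n)) where δ^{(i)}(n) = 1 iff pl ≡ n - u_{b-i} (mod d) for some 0 ≤ l < d{n/d}, and with ϖ_{d,[0,k],u}(a) defined as in the paper (involving floors ⌊(pa+u_{b-i})/d⌋, ⌊a/d⌋, ⌊r_{a,i}/k⌋, ⌊r_a/k⌋ and indicator correction sums over j ≤ r_a and j ≤ r_{a-1}), the partial sums satisfy Σ_{a=0}^{m-1} ϖ_{d,[0,k],u}(a) ≥ Σ_{a=0}^{m-1} ω_{Δ,u}(a) for every m ≥ 0; i.e., the twisted arithmetic polygon p_{d,[0,k],u} of {d} ∪ [0,k] lies on or above the twisted arithmetic polygon p_{Δ,u} of [0,d]. -/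

import Mathlib

open Finset


namespace TwistedArithmeticPolygon

/-- `r_{a-1}`, the remainder mod `d` of `a - 1` (computed in `ℤ`, so `r_{-1} = d-1`). -/
def rprev (d a : ℕ) : ℕ := (((a : ℤ) - 1) % (d : ℤ)).toNat

/-- The fractional part `{x/k}`. -/
noncomputable def frK (k x : ℕ) : ℚ := Int.fract ((x : ℚ) / k)

/-- Indicator `[{x/k} > {t/k}]`. -/
noncomputable def indGT (k x t : ℕ) : ℚ := if frK k t < frK k x then 1 else 0

/-- `δ^{(i)}(n) = 1` iff `pl ≡ n - u_{b-i} (mod d)` for some `0 ≤ l < d{n/d}`. -/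
def deltaIn (p d b : ℕ) (udig : ℕ → ℕ) (i n : ℕ) : ℚ :=
  if ∃ l ∈ Finset.range (n % d),
      (p * l : ℤ) % (d : ℤ) = ((n : ℤ) - (udig (b - i) : ℤ)) % (d : ℤ)
  then 1 else 0

/-- The slope `ω_{Δ,u}(n)` of the twisted arithmetic polygon of `Δ = [0,d]`. -/
noncomputable def omegaSlope (p d b : ℕ) (udig : ℕ → ℕ) (n : ℕ) : ℚ :=
  (1 / (b : ℚ)) * ∑ i ∈ Finset.Icc 1 b,
    ((⌈(((p - 1) * n + udig (b - i) : ℕ) : ℚ) / d⌉ : ℚ) - deltaIn p d b udig i n)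

/-- The slope `ϖ_{d,[0,k],u}(a)` of the twisted arithmetic polygon of `{d} ∪ [0,k]`. -/
noncomputable def varpiSlope (p d k b : ℕ) (udig : ℕ → ℕ) (a : ℕ) : ℚ :=
  (1 / (b : ℚ)) * ∑ i ∈ Finset.Icc 1 b,
      ((⌊((p * a + udig (b - i) : ℕ) : ℚ) / d⌋ : ℚ) - (⌊(a : ℚ) / d⌋ : ℚ)
        + (⌊(((p * a + udig (b - i)) % d : ℕ) : ℚ) / k⌋ : ℚ)
        - (⌊((a % d : ℕ) : ℚ) / k⌋ : ℚ))
  + (1 / (b : ℚ)) * ∑ i ∈ Finset.Icc 1 b, ∑ j ∈ Finset.range (a % d + 1),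
      (indGT k ((p * j + udig (b - i)) % d) (a % d) - indGT k (j % d) (a % d))
  - (1 / (b : ℚ)) * ∑ i ∈ Finset.Icc 1 b, ∑ j ∈ Finset.range (rprev d a + 1),
      (indGT k ((p * j + udig (b - i)) % d) (rprev d a) - indGT k (j % d) (rprev d a))

/-! ### Auxiliary definitions -/

/-- the map `j ↦ (p*j+u) % d`. -/
def sig (p d u j : ℕ) : ℕ := (p * j + u) % d

/-- `g_t(x) = ⌊x/k⌋ + [x%k > t%k]`. -/
def gfun (k t x : ℕ) : ℕ := x / k + if t % k < x % k then 1 else 0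

open scoped Classical in
/-- main per-residue difference. -/
noncomputable def Dq (p d k u r : ℕ) : ℚ :=
  (if ∃ l < r, sig p d u l = r then 1 else 0) - (if r < sig p d u r then 1 else 0)
    + ((sig p d u r / k : ℕ) : ℚ) - ((r / k : ℕ) : ℚ)

/-- correction sum with threshold `s`. -/
noncomputable def Tq (p d k u s : ℕ) : ℚ :=
  ∑ j ∈ range (s + 1),
    ((if s % k < (sig p d u j) % k then (1:ℚ) else 0) - (if s % k < j % k then (1:ℚ) else 0))

/-! ### Elementary floor/ceil/fract lemmas -/

lemma floor_nat_div (n m : ℕ) : ⌊(n : ℚ) / (m : ℚ)⌋ = (n / m : ℕ) := by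
  rw [← Int.natCast_floor_eq_floor (by positivity), Nat.floor_div_natCast, Nat.floor_natCast]

lemma ceil_identity (p d u a : ℕ) (hd : 0 < d) (hp : 1 ≤ p) :
    (⌈(((p - 1) * a + u : ℕ) : ℚ) / d⌉ : ℚ)
      = (((p * a + u) / d : ℕ) : ℚ) - ((a / d : ℕ) : ℚ)
        + (if a % d < (p * a + u) % d then 1 else 0) := by
  have h0 : (0:ℚ) < (d:ℚ) := by positivity
  have e1 : (d:ℚ) * (((p*a+u)/d : ℕ) : ℚ) + (((p*a+u) % d : ℕ) : ℚ) = (p:ℚ)*a+u := by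
    exact_mod_cast congrArg (Nat.cast : ℕ → ℚ) (Nat.div_add_mod (p*a+u) d)
  have e0 : (d:ℚ) * ((a/d : ℕ) : ℚ) + ((a % d : ℕ) : ℚ) = (a:ℚ) := by
    exact_mod_cast congrArg (Nat.cast : ℕ → ℚ) (Nat.div_add_mod a d)
  have hn : (((p - 1) * a + u : ℕ) : ℚ) = ((p:ℚ)*a+u) - a := by
    push_cast [Nat.cast_sub hp]; ring
  have hr1 : (((p*a+u) % d : ℕ) : ℚ) < d := by exact_mod_cast Nat.mod_lt _ hd
  have hr0 : (((a) % d : ℕ) : ℚ) < d := by exact_mod_cast Nat.mod_lt _ hd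
  have hr1' : (0:ℚ) ≤ (((p*a+u) % d : ℕ) : ℚ) := by positivity
  have hr0' : (0:ℚ) ≤ (((a) % d : ℕ) : ℚ) := by positivity
  by_cases hc : a % d < (p * a + u) % d
  · have hcq : ((a % d : ℕ) : ℚ) < (((p*a+u) % d : ℕ) : ℚ) := by exact_mod_cast hc
    rw [if_pos hc]
    have : ⌈(((p - 1) * a + u : ℕ) : ℚ) / d⌉
        = (((p*a+u)/d : ℕ) : ℤ) - ((a/d : ℕ) : ℤ) + 1 := by
      rw [Int.ceil_eq_iff]
      rw [hn, lt_div_iff₀ h0, div_le_iff₀ h0]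
      simp only [Int.cast_sub, Int.cast_add, Int.cast_one, Int.cast_natCast]
      constructor <;> nlinarith
    rw [this]
    simp only [Int.cast_sub, Int.cast_add, Int.cast_one, Int.cast_natCast]
  · have hcq : (((p*a+u) % d : ℕ) : ℚ) ≤ ((a % d : ℕ) : ℚ) := by
      exact_mod_cast Nat.le_of_not_lt hc
    rw [if_neg hc]
    have : ⌈(((p - 1) * a + u : ℕ) : ℚ) / d⌉
        = (((p*a+u)/d : ℕ) : ℤ) - ((a/d : ℕ) : ℤ) := by
      rw [Int.ceil_eq_iff]
      rw [hn, lt_div_iff₀ h0, div_le_iff₀ h0]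
      simp only [Int.cast_sub, Int.cast_add, Int.cast_one, Int.cast_natCast]
      constructor <;> nlinarith
    rw [this]
    simp only [Int.cast_sub, Int.cast_natCast]
    ring

lemma frK_eq (k x : ℕ) (hk : 0 < k) : frK k x = ((x % k : ℕ) : ℚ) / k := by
  have h0 : (0:ℚ) < (k:ℚ) := by positivity
  have e : (x:ℚ) / k = ((x / k : ℕ) : ℚ) + ((x % k : ℕ) : ℚ) / k := by
    field_simp
    exact_mod_cast (Nat.div_add_mod x k).symm
  rw [frK, e, Int.fract_natCast_add, Int.fract_eq_self.2]
  constructor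
  · positivity
  · rw [div_lt_one h0]
    exact_mod_cast Nat.mod_lt _ hk

lemma indGT_eq (k x t : ℕ) (hk : 0 < k) :
    indGT k x t = if t % k < x % k then 1 else 0 := by
  rw [indGT, frK_eq k x hk, frK_eq k t hk]
  congr 1
  rw [div_lt_div_iff_of_pos_right (by positivity : (0:ℚ) < (k:ℚ))]
  simp [Nat.cast_lt]

/-! ### The permutation `sig` -/

lemma sig_injOn (p d : ℕ) (hpd : Nat.gcd p d = 1) (u : ℕ) {j1 j2 : ℕ}
    (h1 : j1 < d) (h2 : j2 < d) (h : sig p d u j1 = sig p d u j2) : j1 = j2 := by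
  have hm : p * j1 + u ≡ p * j2 + u [MOD d] := by
    unfold sig at h
    unfold Nat.ModEq
    omega
  have hm2 : p * j1 ≡ p * j2 [MOD d] := Nat.ModEq.add_right_cancel' u hm
  have := Nat.ModEq.cancel_left_of_coprime (by rw [Nat.gcd_comm]; exact hpd) hm2
  unfold Nat.ModEq at this
  rwa [Nat.mod_eq_of_lt h1, Nat.mod_eq_of_lt h2] at this

lemma sig_lt (p d u j : ℕ) (hd : 0 < d) : sig p d u j < d := Nat.mod_lt _ hd

lemma sig_image (p d u : ℕ) (hpd : Nat.gcd p d = 1) (hd : 0 < d) :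
    (range d).image (sig p d u) = range d := by
  apply Finset.eq_of_subset_of_card_le
  · intro x hx
    simp only [mem_image, mem_range] at hx ⊢
    obtain ⟨j, _, rfl⟩ := hx
    exact sig_lt p d u j hd
  · rw [Finset.card_image_of_injOn, card_range]
    intro j1 h1 j2 h2 h
    exact sig_injOn p d hpd u (mem_range.1 h1) (mem_range.1 h2) h

lemma sum_sig {M : Type*} [AddCommMonoid M] (p d u : ℕ) (hpd : Nat.gcd p d = 1)
    (hd : 0 < d) (f : ℕ → M) :
    ∑ j ∈ range d, f (sig p d u j) = ∑ j ∈ range d, f j := by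
  nth_rewrite 2 [← sig_image p d u hpd hd]
  rw [Finset.sum_image]
  intro j1 h1 j2 h2 h
  exact sig_injOn p d hpd u (mem_range.1 h1) (mem_range.1 h2) h

/-! ### `gfun` lemmas -/

lemma gfun_mono (k t : ℕ) {x y : ℕ} (h : x ≤ y) : gfun k t x ≤ gfun k t y := by
  unfold gfun
  rcases Nat.lt_or_ge (x / k) (y / k) with hdd | hdd
  · split_ifs <;> omega
  · have hde : x / k = y / k := le_antisymm (Nat.div_le_div_right h) hdd
    have h1 := Nat.div_add_mod x k
    have h2 := Nat.div_add_mod y k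
    rw [hde] at h1
    have hm : x % k ≤ y % k := by
      generalize k * (y / k) = M at h1 h2; omega
    split_ifs <;> omega

lemma gfun_jump (k t y : ℕ) (hk : 0 < k) (h : t < y) :
    gfun k t t + 1 ≤ gfun k t y := by
  have step : gfun k t t + 1 = gfun k t (t + 1) := by
    unfold gfun
    have h1 := Nat.div_add_mod t k
    have hlt : t % k < k := Nat.mod_lt _ hk
    rcases Nat.lt_or_ge (t % k + 1) k with hc | hc
    · have : (t+1) / k = t / k ∧ (t+1) % k = t % k + 1 := by
        rw [Nat.div_mod_unique hk]
        constructor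
        · generalize k * (t / k) = M at h1 ⊢; omega
        · exact hc
      rw [this.1, this.2]
      simp [Nat.lt_irrefl]
    · have hke : t % k + 1 = k := by omega
      have : (t+1) / k = t / k + 1 ∧ (t+1) % k = 0 := by
        rw [Nat.div_mod_unique hk]
        constructor
        · rw [Nat.mul_add, Nat.mul_one]
          generalize k * (t / k) = M at h1 ⊢; omega
        · exact hk
      rw [this.1, this.2]
      simp
  calc gfun k t t + 1 = gfun k t (t+1) := step
    _ ≤ gfun k t y := gfun_mono k t h

open scoped Classical in
/-- The core combinatorial inequality. -/
lemma core (p d k u s : ℕ) (hpd : Nat.gcd p d = 1) (hd : 0 < d) (hk : 0 < k) (hs : s < d) :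
    ∑ j ∈ range (s+1), ((if j < sig p d u j then 1 else 0) + gfun k s j)
      ≤ ∑ j ∈ range (s+1),
        ((if ∃ l < j, sig p d u l = j then 1 else 0) + gfun k s (sig p d u j)) := by
  set σ := sig p d u with hσ
  set B := range (s+1) with hB
  have hinj : Set.InjOn σ B := by
    intro j1 h1 j2 h2 h
    simp only [hB, coe_range, Set.mem_Iio] at h1 h2
    exact sig_injOn p d hpd u (by omega) (by omega) h
  set A := B.image σ with hA
  have hgsum : ∑ j ∈ B, gfun k s (σ j) = ∑ x ∈ A, gfun k s x :=
    (Finset.sum_image (fun x hx y hy h => hinj hx hy h)).symm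
  have hdelta : ∑ j ∈ B, (if ∃ l < j, σ l = j then 1 else 0)
      = ((B.filter fun l => l < σ l ∧ σ l ≤ s)).card := by
    have himg : (B.filter fun j => ∃ l < j, σ l = j)
        = (B.filter fun l => l < σ l ∧ σ l ≤ s).image σ := by
      ext x
      simp only [mem_filter, mem_image, hB, mem_range]
      constructor
      · rintro ⟨hx, l, hl, rfl⟩
        exact ⟨l, ⟨by omega, hl, by omega⟩, rfl⟩
      · rintro ⟨l, ⟨hl1, hl2, hl3⟩, rfl⟩
        exact ⟨by omega, l, hl2, rfl⟩
    rw [Finset.sum_boole, Nat.cast_id, himg, Finset.card_image_of_injOn]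
    intro x hx y hy h
    exact hinj (Finset.filter_subset _ _ hx) (Finset.filter_subset _ _ hy) h
  have hchi : ∑ j ∈ B, (if j < σ j then 1 else 0)
      = ((B.filter fun l => l < σ l)).card := by
    rw [Finset.sum_boole, Nat.cast_id]
  have hN : ((B.filter fun l => l < σ l)).card
      = ((B.filter fun l => l < σ l ∧ σ l ≤ s)).card + ((B.filter fun l => s < σ l)).card := by
    rw [← Finset.card_union_of_disjoint]
    · congr 1
      ext x
      simp only [mem_filter, mem_union, hB, mem_range]
      constructor
      · rintro ⟨hx, hlt⟩
        by_cases hq : σ x ≤ s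
        · exact Or.inl ⟨hx, hlt, hq⟩
        · exact Or.inr ⟨hx, by omega⟩
      · rintro (⟨hx, hlt, _⟩ | ⟨hx, hgt⟩)
        · exact ⟨hx, hlt⟩
        · exact ⟨hx, by omega⟩
    · rw [Finset.disjoint_filter]
      rintro x hx ⟨_, h2⟩
      omega
  set N := ((B.filter fun l => s < σ l)).card with hNdef
  have hAB : A \ B = (B.filter fun l => s < σ l).image σ := by
    ext x
    simp only [hA, mem_sdiff, mem_image, mem_filter, hB, mem_range]
    constructor
    · rintro ⟨⟨l, hl, rfl⟩, hnb⟩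
      exact ⟨l, ⟨hl, by omega⟩, rfl⟩
    · rintro ⟨l, ⟨hl, hgt⟩, rfl⟩
      exact ⟨⟨l, hl, rfl⟩, by omega⟩
  have hcardAB : (A \ B).card = N := by
    rw [hAB, Finset.card_image_of_injOn]
    intro x hx y hy h
    exact hinj (Finset.filter_subset _ _ hx) (Finset.filter_subset _ _ hy) h
  have hcardA : A.card = B.card := Finset.card_image_of_injOn hinj
  have hcardBA : (B \ A).card = N := by
    have h1 : (A \ B).card = A.card - (A ∩ B).card := by
      rw [← Finset.card_sdiff_of_subset (Finset.inter_subset_left), Finset.sdiff_inter_self_left]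
    have h2 : (B \ A).card = B.card - (B ∩ A).card := by
      rw [← Finset.card_sdiff_of_subset (Finset.inter_subset_left), Finset.sdiff_inter_self_left]
    have h3 : (A ∩ B).card = (B ∩ A).card := by rw [Finset.inter_comm]
    have h4 : (A ∩ B).card ≤ A.card := Finset.card_le_card Finset.inter_subset_left
    omega
  have hsplitA : ∑ x ∈ A, gfun k s x
      = ∑ x ∈ A \ B, gfun k s x + ∑ x ∈ A ∩ B, gfun k s x := by
    rw [← Finset.sum_sdiff Finset.inter_subset_left, Finset.sdiff_inter_self_left]
  have hsplitB : ∑ x ∈ B, gfun k s x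
      = ∑ x ∈ B \ A, gfun k s x + ∑ x ∈ B ∩ A, gfun k s x := by
    rw [← Finset.sum_sdiff Finset.inter_subset_left, Finset.sdiff_inter_self_left]
  have hint : ∑ x ∈ A ∩ B, gfun k s x = ∑ x ∈ B ∩ A, gfun k s x := by
    rw [Finset.inter_comm]
  have hup : ∑ x ∈ B \ A, gfun k s x ≤ N * gfun k s s := by
    rw [← hcardBA, ← smul_eq_mul]
    apply Finset.sum_le_card_nsmul
    intro x hx
    have : x ≤ s := by
      have := (Finset.mem_sdiff.1 hx).1
      simp only [hB, mem_range] at this; omega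
    exact gfun_mono k s this
  have hlow : N * (gfun k s s + 1) ≤ ∑ x ∈ A \ B, gfun k s x := by
    rw [← hcardAB, ← smul_eq_mul]
    apply Finset.card_nsmul_le_sum
    intro x hx
    have hxs : s < x := by
      have := (Finset.mem_sdiff.1 hx).2
      simp only [hB, mem_range] at this; omega
    have := gfun_jump k s x hk hxs
    omega
  rw [Finset.sum_add_distrib, Finset.sum_add_distrib, hgsum, hdelta, hchi, hN,
    hsplitA, hsplitB, hint]
  have : N * (gfun k s s + 1) = N * gfun k s s + N := by ring
  omega

end TwistedArithmeticPolygon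

namespace TwistedArithmeticPolygon

lemma rprev_zero (d : ℕ) (hd : 0 < d) : rprev d 0 = d - 1 := by
  unfold rprev
  have h1 : ((0:ℕ) : ℤ) - 1 = ((d:ℤ) - 1) + (d:ℤ) * (-1) := by push_cast; ring
  rw [h1, Int.add_mul_emod_self_left]
  rw [Int.emod_eq_of_lt (by omega) (by omega)]
  omega

lemma rprev_succ (d a : ℕ) : rprev d (a + 1) = a % d := by
  unfold rprev
  have h1 : ((a + 1 : ℕ) : ℤ) - 1 = ((a : ℕ) : ℤ) := by push_cast; ring
  rw [h1, ← Int.natCast_mod, Int.toNat_natCast]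

lemma rprev_of_pos (d m : ℕ) (hm : 1 ≤ m) : rprev d m = (m - 1) % d := by
  obtain ⟨a, rfl⟩ : ∃ a, m = a + 1 := ⟨m - 1, by omega⟩
  rw [rprev_succ d a]
  simp

lemma rprev_lt (d a : ℕ) (hd : 0 < d) : rprev d a < d := by
  rcases Nat.eq_zero_or_pos a with rfl | ha
  · rw [rprev_zero d hd]; omega
  · rw [rprev_of_pos d a ha]; exact Nat.mod_lt _ hd

lemma telescope (f : ℕ → ℚ) (d : ℕ) (hd : 0 < d) :
    ∀ m : ℕ, 1 ≤ m →
      ∑ a ∈ range m, (f (a % d) - f (rprev d a)) = f ((m - 1) % d) - f (d - 1) := by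
  intro m hm
  induction m with
  | zero => omega
  | succ n ih =>
    rcases Nat.eq_or_lt_of_le hm with h1 | h1
    · simp [← h1, Nat.zero_mod, rprev_zero d hd, Nat.mod_eq_of_lt hd]
    · have hn : 1 ≤ n := by omega
      rw [Finset.sum_range_succ, ih hn]
      rw [rprev_of_pos d n hn]
      simp only [Nat.add_sub_cancel]
      ring

lemma mod_succ_cases (d m : ℕ) (hd : 2 ≤ d) :
    ((m + 1) % d = m % d + 1 ∧ m % d + 1 < d) ∨ ((m + 1) % d = 0 ∧ m % d = d - 1) := by
  have h1 : (m + 1) % d = (m % d + 1) % d := by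
    conv_lhs => rw [Nat.add_mod, Nat.mod_eq_of_lt (show 1 < d by omega)]
  have hlt : m % d < d := Nat.mod_lt _ (by omega)
  rcases Nat.lt_or_ge (m % d + 1) d with hc | hc
  · left
    rw [h1, Nat.mod_eq_of_lt hc]
    exact ⟨rfl, hc⟩
  · right
    have : m % d + 1 = d := by omega
    rw [h1, this, Nat.mod_self]
    omega

lemma periodic_sum (f : ℕ → ℚ) (d : ℕ) (hd : 2 ≤ d)
    (hzero : ∑ r ∈ range d, f r = 0) :
    ∀ m : ℕ, 1 ≤ m →
      ∑ a ∈ range m, f (a % d) = ∑ r ∈ range ((m - 1) % d + 1), f r := by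
  intro m hm
  induction m with
  | zero => omega
  | succ n ih =>
    rcases Nat.eq_or_lt_of_le hm with h1 | h1
    · simp [← h1, Nat.zero_mod, Nat.mod_eq_of_lt (show 0 < d by omega)]
    · have hn : 1 ≤ n := by omega
      rw [Finset.sum_range_succ, ih hn]
      simp only [Nat.add_sub_cancel]
      rcases mod_succ_cases d (n-1) hd with ⟨h2, h3⟩ | ⟨h2, h3⟩ <;>
        have hnn : n - 1 + 1 = n := by omega
      · rw [hnn] at h2
        rw [h2]
        exact (Finset.sum_range_succ f ((n-1) % d + 1)).symm
      · rw [hnn] at h2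
        rw [h2, h3]
        have : (d - 1) + 1 = d := by omega
        rw [this, hzero, Finset.sum_range_one]
        simp

end TwistedArithmeticPolygon

namespace TwistedArithmeticPolygon

lemma int_cond_iff (p d u l n : ℕ) (hd : 0 < d) :
    ((p * l : ℤ) % (d:ℤ) = ((n:ℤ) - (u:ℤ)) % (d:ℤ)) ↔ sig p d u l = n % d := by
  constructor
  · intro h
    have h2 : ((p:ℤ) * l + u) % (d:ℤ) = ((n:ℤ) - u + u) % d := Int.ModEq.add_right (u:ℤ) h
    have h3 : ((p * l + u : ℕ) : ℤ) % (d:ℤ) = ((n:ℕ) : ℤ) % d := by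
      push_cast
      rw [h2]
      ring_nf
    unfold sig
    have h4 : (((p * l + u) % d : ℕ) : ℤ) = ((n % d : ℕ) : ℤ) := by
      push_cast
      exact h3
    exact_mod_cast h4
  · intro h
    have h3 : ((p * l + u : ℕ) : ℤ) % (d:ℤ) = ((n:ℕ) : ℤ) % d := by
      have h4 : (((p * l + u) % d : ℕ) : ℤ) = ((n % d : ℕ) : ℤ) := by
        exact_mod_cast congrArg (Nat.cast : ℕ → ℤ) h
      push_cast at h4
      exact h4
    have h2 : ((p:ℤ) * l + u - u) % (d:ℤ) = ((n:ℤ) - u) % d := by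
      apply Int.ModEq.sub_right (u:ℤ)
      push_cast at h3
      exact h3
    simpa using h2

lemma deltaIn_eq (p d b : ℕ) (udig : ℕ → ℕ) (i n : ℕ) (hd : 0 < d) :
    deltaIn p d b udig i n
      = (if ∃ l < n % d, sig p d (udig (b - i)) l = n % d then (1:ℚ) else 0) := by
  unfold deltaIn
  refine if_congr ?_ rfl rfl
  constructor
  · rintro ⟨l, hl, hmod⟩
    exact ⟨l, Finset.mem_range.1 hl, (int_cond_iff p d (udig (b-i)) l n hd).1 hmod⟩
  · rintro ⟨l, hl, hsig⟩
    exact ⟨l, Finset.mem_range.2 hl, (int_cond_iff p d (udig (b-i)) l n hd).2 hsig⟩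

lemma corr_eq (p d k u s : ℕ) (hk : 0 < k) (hs : s < d) :
    ∑ j ∈ range (s+1), (indGT k ((p * j + u) % d) s - indGT k (j % d) s)
      = Tq p d k u s := by
  unfold Tq
  apply Finset.sum_congr rfl
  intro j hj
  have hjd : j % d = j := Nat.mod_eq_of_lt (by have := mem_range.1 hj; omega)
  rw [indGT_eq _ _ _ hk, indGT_eq _ _ _ hk, hjd]
  rfl

lemma main_eq (p d k u a : ℕ) (hd : 0 < d) (hp : 1 ≤ p) (hk : 0 < k) :
    ((⌊((p * a + u : ℕ) : ℚ) / d⌋ : ℚ) - (⌊(a : ℚ) / d⌋ : ℚ)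
        + (⌊(((p * a + u) % d : ℕ) : ℚ) / k⌋ : ℚ) - (⌊((a % d : ℕ) : ℚ) / k⌋ : ℚ))
      - ((⌈(((p - 1) * a + u : ℕ) : ℚ) / d⌉ : ℚ)
          - (if ∃ l < a % d, sig p d u l = a % d then (1:ℚ) else 0))
      = Dq p d k u (a % d) := by
  have hsig : sig p d u (a % d) = (p * a + u) % d :=
    ((Nat.mod_modEq a d).mul_left p).add_right u
  rw [ceil_identity p d u a hd hp]
  unfold Dq
  rw [hsig]
  have f1 : (⌊((p * a + u : ℕ) : ℚ) / d⌋ : ℚ) = (((p*a+u)/d : ℕ) : ℚ) := by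
    rw [floor_nat_div (p*a+u) d]; norm_cast
  have f2 : (⌊(a : ℚ) / d⌋ : ℚ) = ((a/d : ℕ) : ℚ) := by
    rw [floor_nat_div a d]; norm_cast
  have f3 : (⌊(((p * a + u) % d : ℕ) : ℚ) / k⌋ : ℚ) = (((p*a+u) % d / k : ℕ) : ℚ) := by
    rw [floor_nat_div ((p*a+u) % d) k]; norm_cast
  have f4 : (⌊((a % d : ℕ) : ℚ) / k⌋ : ℚ) = ((a % d / k : ℕ) : ℚ) := by
    rw [floor_nat_div (a % d) k]; norm_cast
  rw [f1, f2, f3, f4]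
  ring

lemma cast_boole_sum (s : Finset ℕ) (P : ℕ → Prop) [DecidablePred P] :
    ((∑ j ∈ s, if P j then (1:ℕ) else 0 : ℕ) : ℚ) = ∑ j ∈ s, if P j then (1:ℚ) else 0 := by
  push_cast
  apply Finset.sum_congr rfl
  intros j hj
  split_ifs <;> simp

lemma delta_chi_nat (p d u : ℕ) (hpd : Nat.gcd p d = 1) (hd : 0 < d) :
    ∑ j ∈ range d, (if ∃ l < j, sig p d u l = j then (1:ℕ) else 0)
      = ∑ j ∈ range d, (if j < sig p d u j then (1:ℕ) else 0) := by
  rw [Finset.sum_boole, Finset.sum_boole, Nat.cast_id, Nat.cast_id]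
  have himg : (range d).filter (fun j => ∃ l < j, sig p d u l = j)
      = ((range d).filter fun l => l < sig p d u l).image (sig p d u) := by
    ext x
    simp only [mem_filter, mem_image, mem_range]
    constructor
    · rintro ⟨hx, l, hl, rfl⟩
      exact ⟨l, ⟨by omega, hl⟩, rfl⟩
    · rintro ⟨l, ⟨hl1, hl2⟩, rfl⟩
      exact ⟨sig_lt p d u l hd, l, hl2, rfl⟩
  rw [himg, Finset.card_image_of_injOn]
  intro x hx y hy h
  exact sig_injOn p d hpd u (mem_range.1 (Finset.filter_subset _ _ hx))
    (mem_range.1 (Finset.filter_subset _ _ hy)) h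

lemma Dq_period (p d k u : ℕ) (hpd : Nat.gcd p d = 1) (hd : 0 < d) :
    ∑ r ∈ range d, Dq p d k u r = 0 := by
  unfold Dq
  rw [Finset.sum_sub_distrib, Finset.sum_add_distrib, Finset.sum_sub_distrib]
  have hC : ∑ r ∈ range d, (((sig p d u r) / k : ℕ) : ℚ)
      = ∑ r ∈ range d, ((r / k : ℕ) : ℚ) :=
    sum_sig p d u hpd hd (fun r => ((r / k : ℕ) : ℚ))
  have hAB : ∑ r ∈ range d, (if ∃ l < r, sig p d u l = r then (1:ℚ) else 0)
      = ∑ r ∈ range d, (if r < sig p d u r then (1:ℚ) else 0) := by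
    rw [← cast_boole_sum, ← cast_boole_sum]
    exact_mod_cast congrArg (Nat.cast : ℕ → ℚ) (delta_chi_nat p d u hpd hd)
  rw [hC, hAB]
  ring

lemma key_u (p d k u : ℕ) (hpd : Nat.gcd p d = 1) (hd : 2 ≤ d) (hk : 0 < k) (m : ℕ) :
    0 ≤ ∑ a ∈ range m, (Dq p d k u (a % d)
      + (Tq p d k u (a % d) - Tq p d k u (rprev d a))) := by
  rcases Nat.eq_zero_or_pos m with rfl | hm
  · simp
  have hd0 : 0 < d := by omega
  rw [Finset.sum_add_distrib]
  rw [telescope (Tq p d k u) d hd0 m hm]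
  rw [periodic_sum (Dq p d k u) d hd (Dq_period p d k u hpd hd0) m hm]
  set s := (m-1) % d with hs
  have hsd : s < d := Nat.mod_lt _ hd0
  have hTd : Tq p d k u (d-1) = 0 := by
    unfold Tq
    have h1 : d - 1 + 1 = d := by omega
    rw [h1, Finset.sum_sub_distrib]
    rw [sum_sig p d u hpd hd0 (fun x => if (d-1) % k < x % k then (1:ℚ) else 0)]
    ring
  rw [hTd, sub_zero]
  have hcore := core p d k u s hpd hd0 hk hsd
  have hcast : ∑ r ∈ range (s+1), Dq p d k u r + Tq p d k u s
      = ((∑ j ∈ range (s+1),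
            ((if ∃ l < j, sig p d u l = j then 1 else 0) + gfun k s (sig p d u j)) : ℕ) : ℚ)
        - ((∑ j ∈ range (s+1),
            ((if j < sig p d u j then 1 else 0) + gfun k s j) : ℕ) : ℚ) := by
    rw [Tq, ← Finset.sum_add_distrib]
    push_cast
    rw [← Finset.sum_sub_distrib]
    apply Finset.sum_congr rfl
    intro j hj
    unfold Dq gfun
    push_cast
    split_ifs <;> ring
  rw [hcast]
  rw [sub_nonneg]
  exact_mod_cast hcore

end TwistedArithmeticPolygon

namespace TwistedArithmeticPolygon

/-- Theorem 1.8: the twisted arithmetic polygon `p_{d,[0,k],u}` of `{d} ∪ [0,k]` lies on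
or above the twisted arithmetic polygon `p_{Δ,u}` of `[0,d]`:
`Σ_{a<m} ϖ_{d,[0,k],u}(a) ≥ Σ_{a<m} ω_{Δ,u}(a)` for every `m`. -/
theorem varpi_ge_omega (p d k b : ℕ) (udig : ℕ → ℕ) (hp : p.Prime)
    (hpd : Nat.gcd p d = 1) (hd : 2 ≤ d) (hk1 : 1 ≤ k) (hk2 : k ≤ d - 1)
    (hb : 1 ≤ b) (hudig : ∀ i, udig i ≤ p - 1) :
    ∀ m : ℕ, ∑ a ∈ Finset.range m, omegaSlope p d b udig a
      ≤ ∑ a ∈ Finset.range m, varpiSlope p d k b udig a := by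
  intro m
  rw [← sub_nonneg, ← Finset.sum_sub_distrib]
  have hp1 : 1 ≤ p := hp.pos
  have hd0 : 0 < d := by omega
  have hper : ∀ a, varpiSlope p d k b udig a - omegaSlope p d b udig a
      = (1/(b:ℚ)) * ∑ i ∈ Icc 1 b, (Dq p d k (udig (b-i)) (a % d)
          + (Tq p d k (udig (b-i)) (a % d) - Tq p d k (udig (b-i)) (rprev d a))) := by
    intro a
    unfold varpiSlope omegaSlope
    have hre : ∀ (X Y Z W : ℚ),
        (1/(b:ℚ))*X + (1/(b:ℚ))*Y - (1/(b:ℚ))*Z - (1/(b:ℚ))*W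
          = (1/(b:ℚ))*(X + Y - Z - W) := by intros; ring
    rw [hre]
    congr 1
    rw [← Finset.sum_add_distrib, ← Finset.sum_sub_distrib, ← Finset.sum_sub_distrib]
    apply Finset.sum_congr rfl
    intro i hi
    rw [corr_eq p d k (udig (b-i)) (a % d) hk1 (Nat.mod_lt _ hd0)]
    rw [corr_eq p d k (udig (b-i)) (rprev d a) hk1 (rprev_lt d a hd0)]
    rw [deltaIn_eq p d b udig i a hd0]
    linear_combination main_eq p d k (udig (b-i)) a hd0 hp1 hk1
  rw [Finset.sum_congr rfl (fun a _ => hper a), ← Finset.mul_sum, Finset.sum_comm]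
  apply mul_nonneg (by positivity)
  apply Finset.sum_nonneg
  intro i _
  exact key_u p d k (udig (b-i)) hpd hd hk1 m


end TwistedArithmeticPolygon
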